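/- Let m ≥ 1 and let a, b : Fin m → ℝ be two families of real numbers such that ∑ᵢ (a i)^k = ∑ᵢ (b i)^k for every k with 1 ≤ k ≤ m. Then the two families define the same multiset; that is, there exists a permutation σ of Fin m such that b i = a (σ i) for all i. -/

import Mathlib

open Finset Polynomial

theorem stmt_19 (m : ℕ) (hm : 1 ≤ m) (a b : Fin m → ℝ)
    (h : ∀ k, 1 ≤ k → k ≤ m → ∑ i, a i ^ k = ∑ i, b i ^ k) :
    ∃ σ : Equiv.Perm (Fin m), ∀ i, b i = a (σ i) := by
  classical
  -- power sums of evaluations agree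
  have hps : ∀ k, 1 ≤ k → k ≤ m →
      MvPolynomial.aeval a (MvPolynomial.psum (Fin m) ℝ k)
        = MvPolynomial.aeval b (MvPolynomial.psum (Fin m) ℝ k) := by
    intro k h1 h2
    simp only [MvPolynomial.psum, map_sum, map_pow, MvPolynomial.aeval_X]
    exact h k h1 h2
  -- elementary symmetric functions agree
  have hesymm : ∀ k, k ≤ m →
      MvPolynomial.aeval a (MvPolynomial.esymm (Fin m) ℝ k)
        = MvPolynomial.aeval b (MvPolynomial.esymm (Fin m) ℝ k) := by
    intro k
    induction k using Nat.strong_induction_on with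
    | _ k ih =>
      intro hk
      rcases Nat.eq_zero_or_pos k with rfl | hk1
      · simp
      · have key := congrArg (MvPolynomial.aeval a)
          (MvPolynomial.mul_esymm_eq_sum (Fin m) ℝ k)
        have key' := congrArg (MvPolynomial.aeval b)
          (MvPolynomial.mul_esymm_eq_sum (Fin m) ℝ k)
        simp only [map_mul, map_natCast, map_pow, map_neg, map_one, map_sum] at key key'
        have hsum : ∑ p ∈ Finset.HasAntidiagonal.antidiagonal k with p.1 < k,
              MvPolynomial.aeval a ((-1) ^ p.1 * MvPolynomial.esymm (Fin m) ℝ p.1 *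
                MvPolynomial.psum (Fin m) ℝ p.2)
            = ∑ p ∈ Finset.HasAntidiagonal.antidiagonal k with p.1 < k,
              MvPolynomial.aeval b ((-1) ^ p.1 * MvPolynomial.esymm (Fin m) ℝ p.1 *
                MvPolynomial.psum (Fin m) ℝ p.2) := by
          apply Finset.sum_congr rfl
          intro p hp
          simp only [Finset.mem_filter, Finset.HasAntidiagonal.mem_antidiagonal] at hp
          obtain ⟨hpk, hplt⟩ := hp
          have hp2 : 1 ≤ p.2 := by omega
          have hp2m : p.2 ≤ m := by omega
          have hp1m : p.1 ≤ m := by omega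
          simp only [map_mul, map_pow, map_neg, map_one]
          rw [ih p.1 hplt hp1m, hps p.2 hp2 hp2m]
        simp only [map_mul, map_pow, map_neg, map_one] at hsum
        rw [hsum] at key
        have hk0 : (k : ℝ) ≠ 0 := Nat.cast_ne_zero.mpr (by omega)
        exact mul_left_cancel₀ hk0 (key.trans key'.symm)
  -- multiset esymm equality
  set Ma : Multiset ℝ := Finset.univ.val.map a with hMa
  set Mb : Multiset ℝ := Finset.univ.val.map b with hMb
  have hcard : Multiset.card Ma = m := by simp [hMa]
  have hcardb : Multiset.card Mb = m := by simp [hMb]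
  have hes : ∀ k, k ≤ m → Ma.esymm k = Mb.esymm k := by
    intro k hk
    have := hesymm k hk
    rwa [MvPolynomial.aeval_esymm_eq_multiset_esymm, MvPolynomial.aeval_esymm_eq_multiset_esymm]
      at this
  -- the polynomials ∏ (X - C r) agree
  have hpoly : (Ma.map fun r => X - C r).prod = (Mb.map fun r => X - C r).prod := by
    ext k
    rcases le_or_gt k m with hkm | hkm
    · rw [Multiset.prod_X_sub_C_coeff Ma (hcard ▸ hkm), Multiset.prod_X_sub_C_coeff Mb (hcardb ▸ hkm),
        hcard, hcardb, hes (m - k) (Nat.sub_le _ _)]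
    · rw [Polynomial.coeff_eq_zero_of_natDegree_lt, Polynomial.coeff_eq_zero_of_natDegree_lt]
      · rw [Polynomial.natDegree_multiset_prod_X_sub_C_eq_card, hcardb]; exact hkm
      · rw [Polynomial.natDegree_multiset_prod_X_sub_C_eq_card, hcard]; exact hkm
  -- hence equal root multisets
  have hmult : Ma = Mb := by
    have := congrArg Polynomial.roots hpoly
    rwa [Polynomial.roots_multiset_prod_X_sub_C, Polynomial.roots_multiset_prod_X_sub_C] at this
  -- turn multiset equality into a permutation, via sorting
  have hofFn : List.ofFn (a ∘ Tuple.sort a) = List.ofFn (b ∘ Tuple.sort b) := by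
    refine List.Perm.eq_of_sortedLE (Monotone.sortedLE_ofFn (Tuple.monotone_sort a))
      (Monotone.sortedLE_ofFn (Tuple.monotone_sort b)) ?_
    · have h1 : (↑(List.ofFn (a ∘ Tuple.sort a)) : Multiset ℝ) = Ma := by
        rw [hMa, Fin.univ_val_map, Multiset.coe_eq_coe]
        exact (Tuple.sort a).ofFn_comp_perm a
      have h2 : (↑(List.ofFn (b ∘ Tuple.sort b)) : Multiset ℝ) = Mb := by
        rw [hMb, Fin.univ_val_map, Multiset.coe_eq_coe]
        exact (Tuple.sort b).ofFn_comp_perm b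
      rw [← Multiset.coe_eq_coe, h1, h2, hmult]
  have hfun : a ∘ Tuple.sort a = b ∘ Tuple.sort b := List.ofFn_injective hofFn
  refine ⟨(Tuple.sort b).symm.trans (Tuple.sort a), fun i => ?_⟩
  have := congrFun hfun ((Tuple.sort b).symm i)
  simp only [Function.comp_apply, Equiv.apply_symm_apply] at this
  simpa [Equiv.trans_apply] using this.symm
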